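/- Let ℛ be a first order reaction network on d species without purely catalytic species, and suppose the weakly connected component ℛ⁰ of the reaction graph containing the zero complex and its complement ℛ• share no species. Then every communicating class of the generic SRS ℛ in ℕ₀^d is the Cartesian product of a communicating class of ℛ⁰ in ℕ₀^{d₀} and a communicating class of ℛ• in ℕ₀^{d−d₀}, where d₀ is the number of species of ℛ⁰. -/

import Mathlib

/-- One firing step of a generic SRS on a partially ordered additive state space:
a reaction `(y, y') ∈ R` fires at `x` iff `y ≤ x`, moving the state to `x - y + y'`
(expressed additively as `x' + y = x + y'`). -/
def Step {S : Type*} [AddCommMonoid S] [PartialOrder S]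
    (R : Set (S × S)) (x x' : S) : Prop :=
  ∃ r ∈ R, r.1 ≤ x ∧ x' + r.1 = x + r.2

/-- Reachability `x ⇀ z` for a generic SRS. -/
def Reaches {S : Type*} [AddCommMonoid S] [PartialOrder S]
    (R : Set (S × S)) : S → S → Prop :=
  Relation.ReflTransGen (Step R)

/-- If a first order network splits as the disjoint union of a subnetwork `ℛ⁰` on
the first `d₀` species and a subnetwork `ℛ•` on the remaining species, then two
states communicate for the joint network iff the corresponding blocks communicate
for `ℛ⁰` and for `ℛ•` respectively; i.e., every communicating class of the joint
network is the Cartesian product of a class of `ℛ⁰` and a class of `ℛ•`. -/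
theorem communicating_class_product {d₀ d₁ : ℕ}
    (R0 : Set ((Fin d₀ → ℕ) × (Fin d₀ → ℕ)))
    (R1 : Set ((Fin d₁ → ℕ) × (Fin d₁ → ℕ)))
    (h0first : ∀ r ∈ R0, ∑ i, r.1 i ≤ 1) (h0ne : ∀ r ∈ R0, r.1 ≠ r.2)
    (h1first : ∀ r ∈ R1, ∑ i, r.1 i ≤ 1) (h1ne : ∀ r ∈ R1, r.1 ≠ r.2) :
    let R : Set (((Fin d₀ → ℕ) × (Fin d₁ → ℕ)) × ((Fin d₀ → ℕ) × (Fin d₁ → ℕ))) :=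
      (fun r => ((r.1, 0), (r.2, 0))) '' R0 ∪ (fun r => ((0, r.1), (0, r.2))) '' R1
    ∀ x z : (Fin d₀ → ℕ) × (Fin d₁ → ℕ),
      (Reaches R x z ∧ Reaches R z x) ↔
        ((Reaches R0 x.1 z.1 ∧ Reaches R0 z.1 x.1) ∧
          (Reaches R1 x.2 z.2 ∧ Reaches R1 z.2 x.2)) := by
  intro R x z
  -- A step of the joint network acts in exactly one block, fixing the other.
  have hstep : ∀ a b : (Fin d₀ → ℕ) × (Fin d₁ → ℕ), Step R a b ↔
      ((Step R0 a.1 b.1 ∧ a.2 = b.2) ∨ (Step R1 a.2 b.2 ∧ a.1 = b.1)) := by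
    intro a b
    constructor
    · rintro ⟨r, hr, hle, heq⟩
      rcases hr with ⟨s, hs, rfl⟩ | ⟨s, hs, rfl⟩
      · left
        refine ⟨⟨s, hs, hle.1, congrArg Prod.fst heq⟩, ?_⟩
        have h2 := congrArg Prod.snd heq
        simpa using h2.symm
      · right
        refine ⟨⟨s, hs, hle.2, congrArg Prod.snd heq⟩, ?_⟩
        have h1 := congrArg Prod.fst heq
        simpa using h1.symm
    · rintro (⟨⟨s, hs, hle, heq⟩, h2⟩ | ⟨⟨s, hs, hle, heq⟩, h1⟩)
      · refine ⟨((s.1, 0), (s.2, 0)), Or.inl ⟨s, hs, rfl⟩, ⟨hle, by simp⟩, ?_⟩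
        exact Prod.ext heq (by simpa using h2.symm)
      · refine ⟨((0, s.1), (0, s.2)), Or.inr ⟨s, hs, rfl⟩, ⟨by simp, hle⟩, ?_⟩
        exact Prod.ext (by simpa using h1.symm) heq
  -- Lifts of block reachability to joint reachability.
  have lift0 : ∀ (p q : Fin d₀ → ℕ) (c : Fin d₁ → ℕ),
      Reaches R0 p q → Reaches R (p, c) (q, c) := by
    intro p q c h
    exact Relation.ReflTransGen.lift (fun u => (u, c))
      (fun u v huv => (hstep (u, c) (v, c)).2 (Or.inl ⟨huv, rfl⟩)) p q h
  have lift1 : ∀ (p q : Fin d₁ → ℕ) (c : Fin d₀ → ℕ),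
      Reaches R1 p q → Reaches R (c, p) (c, q) := by
    intro p q c h
    exact Relation.ReflTransGen.lift (fun u => (c, u))
      (fun u v huv => (hstep (c, u) (c, v)).2 (Or.inr ⟨huv, rfl⟩)) p q h
  -- Joint reachability factors blockwise.
  have hreach : ∀ a b : (Fin d₀ → ℕ) × (Fin d₁ → ℕ),
      Reaches R a b ↔ (Reaches R0 a.1 b.1 ∧ Reaches R1 a.2 b.2) := by
    intro a b
    constructor
    · intro h
      induction h with
      | refl => exact ⟨Relation.ReflTransGen.refl, Relation.ReflTransGen.refl⟩
      | tail _ hs ih =>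
        rcases (hstep _ _).1 hs with ⟨h0, h2⟩ | ⟨h1, h2⟩
        · exact ⟨ih.1.tail h0, h2 ▸ ih.2⟩
        · exact ⟨h2 ▸ ih.1, ih.2.tail h1⟩
    · rintro ⟨h0, h1⟩
      exact Relation.ReflTransGen.trans (lift0 a.1 b.1 a.2 h0) (lift1 a.2 b.2 b.1 h1)
  rw [hreach x z, hreach z x]
  tauto
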